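/- Let K̂₀ : ℝ^d → [0,1) be measurable with 0 ≤ K̂₀(x) ≤ A/(1 + ‖x‖^{d+τ}) for constants A, τ > 0, and for ε > 0 define on ℓ²(ℤ^d) the Toeplitz-type quadratic form Q_ε(v) = Σ_{j,k∈ℤ^d} v_j v_k ε^d K₀(ε(k−j)), where K₀ is the inverse Fourier transform of K̂₀. Then for every unit vector v, Q_ε(v) ≤ Σ_{i∈ℤ^d} sup_{x∈C_i} K̂₀(x/ε), where C_i is the unit cube centered at i, and Σ_{i≠0} sup_{x∈C_i} K̂₀(x/ε) → 0 as ε → 0; consequently limsup_{ε→0} sup_{‖v‖=1} Q_ε(v) ≤ ‖K̂₀‖_∞. -/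

import Mathlib

open MeasureTheory Filter Set

/-- Embedding of the lattice `ℤ^d` into `ℝ^d`. -/
noncomputable def intToEuc (d : ℕ) (z : Fin d → ℤ) : EuclideanSpace ℝ (Fin d) :=
  (EuclideanSpace.equiv (Fin d) ℝ).symm fun i => (z i : ℝ)

namespace DKEB


lemma intToEuc_apply (d : ℕ) (z : Fin d → ℤ) (k : Fin d) : intToEuc d z k = (z k : ℝ) := rfl

noncomputable def e (r : ℝ) : ℂ := Complex.exp (2 * Real.pi * Complex.I * r)

lemma e_add (r s : ℝ) : e (r + s) = e r * e s := by
  simp only [e, ← Complex.exp_add]; push_cast; ring_nf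

lemma e_zero : e 0 = 1 := by simp [e]

lemma e_int (n : ℤ) : e n = 1 := by
  have := Complex.exp_int_mul_two_pi_mul_I n
  simpa [e, mul_comm, mul_assoc, mul_left_comm] using this

lemma norm_e (r : ℝ) : ‖e r‖ = 1 := by
  simp [e, Complex.norm_exp]

lemma conj_e (r : ℝ) : (starRingEnd ℂ) (e r) = e (-r) := by
  simp only [e, ← Complex.exp_conj]
  congr 1
  simp only [map_mul, Complex.conj_I, Complex.conj_ofReal, map_ofNat]
  push_cast; ring

lemma continuous_e : Continuous e := by
  unfold e; fun_prop

lemma oneDim (m : ℤ) (a : ℝ) :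
    ∫ t in Set.Ico (a - 1/2) (a + 1/2), e (m * t) = if m = 0 then 1 else 0 := by
  rcases eq_or_ne m 0 with rfl | hm
  · simp only [Int.cast_zero, zero_mul, e_zero, if_pos rfl]
    rw [setIntegral_const]
    rw [Real.volume_real_Ico]
    norm_num
  · rw [if_neg hm]
    have hc : (2 * Real.pi * Complex.I * m : ℂ) ≠ 0 := by
      simp [Real.pi_ne_zero, Complex.I_ne_zero, hm]
    have hfun : ∀ t : ℝ, e (m * t) = Complex.exp ((2 * Real.pi * Complex.I * m) * t) := by
      intro t; unfold e; push_cast; ring_nf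
    calc ∫ t in Set.Ico (a - 1/2) (a + 1/2), e (m * t)
        = ∫ t in Set.Ioc (a - 1/2) (a + 1/2), e (m * t) := by
          rw [MeasureTheory.integral_Ico_eq_integral_Ioo,
            ← MeasureTheory.integral_Ioc_eq_integral_Ioo]
      _ = ∫ t in (a - 1/2)..(a + 1/2), Complex.exp ((2 * Real.pi * Complex.I * m) * t) := by
          rw [intervalIntegral.integral_of_le (by linarith)]
          simp_rw [hfun]
      _ = 0 := by
          rw [integral_exp_mul_complex hc]
          have h1 : (2 * Real.pi * Complex.I * m) * (a + 1/2 : ℝ)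
              = (2 * Real.pi * Complex.I * m) * (a - 1/2 : ℝ) + m * (2 * Real.pi * Complex.I) := by
            push_cast; ring
          rw [h1, Complex.exp_add, Complex.exp_int_mul_two_pi_mul_I, mul_one, sub_self, zero_div]



variable {d : ℕ}

def Dset (c : Fin d → ℝ) : Set (EuclideanSpace ℝ (Fin d)) :=
  {u | ∀ k, u k ∈ Set.Ico (c k - 1/2) (c k + 1/2)}

lemma Dset_eq_preimage (c : Fin d → ℝ) :
    Dset c = ((MeasurableEquiv.toLp 2 (Fin d → ℝ)).symm) ⁻¹'
      (Set.univ.pi fun k => Set.Ico (c k - 1/2) (c k + 1/2)) := by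
  ext u
  simp only [Dset, Set.mem_setOf_eq, Set.mem_preimage, Set.mem_pi, Set.mem_univ, forall_true_left,
    true_implies]
  rfl

lemma measurableSet_Dset (c : Fin d → ℝ) : MeasurableSet (Dset c) := by
  rw [Dset_eq_preimage]
  exact (MeasurableEquiv.measurable _) (MeasurableSet.univ_pi fun k => measurableSet_Ico)

lemma volume_Dset (c : Fin d → ℝ) : volume (Dset c) = 1 := by
  rw [Dset_eq_preimage]
  rw [(EuclideanSpace.volume_preserving_symm_measurableEquiv_toLp (Fin d)).measure_preimage
    (MeasurableSet.univ_pi fun k => measurableSet_Ico).nullMeasurableSet]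
  rw [volume_pi_pi]
  simp only [Real.volume_Ico]
  norm_num

lemma mem_Ico_iff_floor (n : ℤ) (x : ℝ) :
    x ∈ Set.Ico ((n:ℝ) - 1/2) ((n:ℝ) + 1/2) ↔ ⌊x + 1/2⌋ = n := by
  rw [Int.floor_eq_iff]
  constructor
  · rintro ⟨h1, h2⟩; exact ⟨by linarith, by linarith⟩
  · rintro ⟨h1, h2⟩; exact ⟨by linarith, by linarith⟩

lemma Dset_disjoint : Pairwise (Function.onFun Disjoint
    (fun i : Fin d → ℤ => Dset (fun k => (i k : ℝ)))) := by
  intro i j hij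
  rw [Function.onFun, Set.disjoint_left]
  intro x hxi hxj
  apply hij
  funext k
  have h1 := (mem_Ico_iff_floor (i k) (x k)).1 (hxi k)
  have h2 := (mem_Ico_iff_floor (j k) (x k)).1 (hxj k)
  rw [← h1, ← h2]

lemma Dset_cover : (⋃ i : Fin d → ℤ, Dset (fun k => ((i k : ℝ)))) = Set.univ := by
  ext x
  simp only [Set.mem_iUnion, Set.mem_univ, iff_true]
  exact ⟨fun k => ⌊x k + 1/2⌋, fun k => (mem_Ico_iff_floor _ _).2 rfl⟩

lemma coord_abs_le_norm (x : EuclideanSpace ℝ (Fin d)) (k : Fin d) : |x k| ≤ ‖x‖ := by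
  rw [EuclideanSpace.norm_eq]
  rw [← Real.sqrt_sq_eq_abs]
  apply Real.sqrt_le_sqrt
  have : (x k)^2 = ‖x k‖^2 := by simp [Real.norm_eq_abs, sq_abs]
  rw [this]
  exact Finset.single_le_sum (fun i _ => sq_nonneg ‖x i‖) (Finset.mem_univ k)

-- orth section

lemma e_sum_prod (m : Fin d → ℤ) (u : Fin d → ℝ) :
    e (∑ k, (m k : ℝ) * u k) = ∏ k, e ((m k : ℝ) * u k) := by
  unfold e
  rw [← Complex.exp_sum]
  congr 1
  push_cast
  rw [Finset.mul_sum]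

lemma orth (m : Fin d → ℤ) (c : Fin d → ℝ) :
    ∫ u in Dset c, e (∑ k, (m k : ℝ) * u k) = if m = 0 then 1 else 0 := by
  rw [Dset_eq_preimage]
  have hE := EuclideanSpace.volume_preserving_symm_measurableEquiv_toLp (Fin d)
  have key := hE.setIntegral_preimage_emb (MeasurableEquiv.measurableEmbedding _)
    (fun x : Fin d → ℝ => e (∑ k, (m k : ℝ) * x k))
    (Set.univ.pi fun k => Set.Ico (c k - 1/2) (c k + 1/2))
  rw [show (∫ u in ((MeasurableEquiv.toLp 2 (Fin d → ℝ)).symm) ⁻¹'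
      (Set.univ.pi fun k => Set.Ico (c k - 1/2) (c k + 1/2)),
      e (∑ k, (m k : ℝ) * u k)) = ∫ x in (Set.univ.pi fun k => Set.Ico (c k - 1/2) (c k + 1/2)),
      e (∑ k, (m k : ℝ) * x k) from key]
  have hmeas : MeasurableSet (Set.univ.pi fun k => Set.Ico (c k - 1/2) (c k + 1/2)) :=
    MeasurableSet.univ_pi fun k => measurableSet_Ico
  rw [← MeasureTheory.integral_indicator hmeas]
  have hind : ∀ x : Fin d → ℝ,
      (Set.univ.pi fun k => Set.Ico (c k - 1/2) (c k + 1/2)).indicator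
        (fun x => e (∑ k, (m k : ℝ) * x k)) x
      = ∏ k, (Set.Ico (c k - 1/2) (c k + 1/2)).indicator (fun t => e ((m k : ℝ) * t)) (x k) := by
    intro x
    by_cases h : ∀ k, x k ∈ Set.Ico (c k - 1/2) (c k + 1/2)
    · have hmem : x ∈ Set.univ.pi fun k => Set.Ico (c k - 1/2) (c k + 1/2) := by
        simp only [Set.mem_pi, Set.mem_univ, true_implies]
        exact h
      rw [Set.indicator_of_mem hmem]
      rw [e_sum_prod]
      exact Finset.prod_congr rfl fun k _ =>
        (Set.indicator_of_mem (h k) (fun t => e ((m k : ℝ) * t))).symm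
    · push_neg at h
      obtain ⟨k, hk⟩ := h
      have hnot : x ∉ Set.univ.pi fun k => Set.Ico (c k - 1/2) (c k + 1/2) := by
        simp only [Set.mem_pi, Set.mem_univ, true_implies]
        exact fun hall => hk (hall k)
      rw [Set.indicator_of_notMem hnot]
      exact (Finset.prod_eq_zero (Finset.mem_univ k)
        (Set.indicator_of_notMem hk _)).symm
  simp_rw [hind]
  rw [MeasureTheory.integral_fintype_prod_volume_eq_prod (ι := Fin d)
    (fun k => (Set.Ico (c k - 1/2) (c k + 1/2)).indicator (fun t => e ((m k : ℝ) * t)))]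
  have h1 : ∀ k, ∫ t : ℝ, (Set.Ico (c k - 1/2) (c k + 1/2)).indicator
      (fun t => e ((m k : ℝ) * t)) t = if m k = 0 then 1 else 0 := by
    intro k
    rw [MeasureTheory.integral_indicator measurableSet_Ico]
    exact oneDim (m k) (c k)
  simp_rw [h1]
  rcases eq_or_ne m 0 with rfl | hm
  · simp
  · rw [if_neg hm]
    have : ∃ k, m k ≠ 0 := by
      by_contra h
      push_neg at h
      exact hm (funext h)
    obtain ⟨k, hk⟩ := this
    exact Finset.prod_eq_zero (Finset.mem_univ k) (by rw [if_neg hk])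



lemma summable_one_add_abs_int {p : ℝ} (hp : 1 < p) :
    Summable (fun n : ℤ => ((1:ℝ) + |(n:ℝ)|) ^ (-p)) := by
  have hf : Summable (fun n : ℤ => 1 / |(n:ℝ)| ^ p) := by
    have := (Real.summable_one_div_int_add_rpow 0 p).2 hp
    simpa using this
  have hh : Summable (fun n : ℤ => if n = 0 then (1:ℝ) else 0) := by
    apply summable_of_ne_finset_zero (s := {0})
    intro n hn
    simp only [Finset.mem_singleton] at hn
    rw [if_neg hn]
  apply Summable.of_nonneg_of_le (fun n => Real.rpow_nonneg (by positivity) _)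
    (f := fun n : ℤ => (if n = 0 then (1:ℝ) else 0) + 1 / |(n:ℝ)| ^ p) _ (hh.add hf)
  intro n
  rcases eq_or_ne n 0 with rfl | hn
  · simp only [Int.cast_zero, abs_zero, add_zero, Real.one_rpow, if_pos rfl]
    have h0 : (0:ℝ) ^ p = 0 := Real.zero_rpow (by linarith)
    rw [h0]
    norm_num
  · simp only [if_neg hn, zero_add]
    have h1 : (0:ℝ) < |(n:ℝ)| := by
      simp only [abs_pos, ne_eq, Int.cast_eq_zero]
      exact hn
    have h2 : |(n:ℝ)| ≤ 1 + |(n:ℝ)| := by linarith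
    have := Real.rpow_le_rpow_of_nonpos h1 h2 (neg_nonpos.mpr (by linarith : (0:ℝ) ≤ p))
    rw [Real.rpow_neg (abs_nonneg _), ← one_div] at this
    exact this

lemma summable_pi_prod {b : ℤ → ℝ} (hb : Summable b) (hb0 : ∀ n, 0 ≤ b n) (n : ℕ) :
    Summable (fun i : Fin n → ℤ => ∏ k, b (i k)) := by
  induction n with
  | zero => exact Summable.of_finite
  | succ n ih =>
      have hmul := hb.mul_of_nonneg ih hb0
        (fun i => Finset.prod_nonneg fun k _ => hb0 _)
      rw [← Equiv.summable_iff (Fin.consEquiv (fun _ : Fin (n+1) => ℤ))]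
      apply hmul.congr
      intro x
      simp only [Function.comp_apply, Fin.consEquiv_apply]
      rw [Fin.prod_univ_succ]
      simp [Fin.cons_zero, Fin.cons_succ]




lemma decay_bound {d : ℕ} {A τ ε : ℝ} (hA : 0 < A) (hτ : 0 < τ) (hε : 0 < ε)
    {Khat : EuclideanSpace ℝ (Fin d) → ℝ}
    (hKdecay : ∀ x, 0 ≤ Khat x ∧ Khat x ≤ A / (1 + ‖x‖ ^ ((d : ℝ) + τ)))
    (i : Fin d → ℤ) (hi : i ≠ 0) (x : EuclideanSpace ℝ (Fin d))
    (hx : ∀ k, |x k - (i k : ℝ)| ≤ 1 / 2) :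
    Khat (ε⁻¹ • x) ≤ A * 4 ^ ((d:ℝ) + τ) * ε ^ ((d:ℝ) + τ) *
      ∏ k, ((1:ℝ) + |(i k : ℝ)|) ^ (-(((d:ℝ) + τ) / d)) := by
  set s : ℝ := (d:ℝ) + τ with hs
  -- d ≥ 1
  have hd : d ≠ 0 := by
    rintro rfl
    exact hi (funext fun k => absurd k.2 (by simp))
  have hd1 : (1:ℝ) ≤ d := by exact_mod_cast Nat.one_le_iff_ne_zero.mpr hd
  have hspos : 0 < s := by positivity
  -- maximum coordinate
  obtain ⟨k₀, -, hk₀⟩ := Finset.exists_max_image Finset.univ (fun k => |i k|)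
    ⟨⟨0, Nat.pos_of_ne_zero hd⟩, Finset.mem_univ _⟩
  set M : ℝ := |(i k₀ : ℝ)| with hM
  have hMint : ∀ k, |(i k : ℝ)| ≤ M := by
    intro k
    have := hk₀ k (Finset.mem_univ k)
    rw [hM]
    push_cast
    exact_mod_cast this
  have hM1 : 1 ≤ M := by
    obtain ⟨k₁, hk₁⟩ : ∃ k, i k ≠ 0 := by
      by_contra h
      push_neg at h
      exact hi (funext h)
    have : (1:ℝ) ≤ |(i k₁ : ℝ)| := by
      rw [← Int.cast_abs]
      exact_mod_cast Int.one_le_abs hk₁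
    exact le_trans this (hMint k₁)
  -- ‖x‖ ≥ M / 2
  have hxnorm : M / 2 ≤ ‖x‖ := by
    have h1 : |(i k₀ : ℝ)| - 1/2 ≤ |x k₀| := by
      have := hx k₀
      have := abs_sub_abs_le_abs_sub (x k₀) ((i k₀ : ℝ))
      have h3 := abs_sub_comm (x k₀) ((i k₀ : ℝ))
      -- |i k₀| - |x k₀| ≤ |i k₀ - x k₀| = |x k₀ - i k₀| ≤ 1/2
      have h4 := abs_sub_abs_le_abs_sub ((i k₀ : ℝ)) (x k₀)
      rw [← h3] at h4
      linarith [hx k₀]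
    have := coord_abs_le_norm x k₀
    rw [← hM] at h1
    linarith
  have hxpos : 0 < ‖x‖ := lt_of_lt_of_le (by linarith) hxnorm
  -- step 1 : Khat (ε⁻¹ • x) ≤ A * ε ^ s / ‖x‖ ^ s
  have hnorm_smul : ‖ε⁻¹ • x‖ = ε⁻¹ * ‖x‖ := by
    rw [norm_smul, Real.norm_eq_abs, abs_of_pos (by positivity)]
  have step1 : Khat (ε⁻¹ • x) ≤ A * ε ^ s / ‖x‖ ^ s := by
    have h1 := (hKdecay (ε⁻¹ • x)).2
    have h2 : A / (1 + ‖ε⁻¹ • x‖ ^ s) ≤ A / ‖ε⁻¹ • x‖ ^ s := by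
      apply div_le_div_of_nonneg_left hA.le
      · apply Real.rpow_pos_of_pos
        rw [hnorm_smul]; positivity
      · linarith
    have h3 : ‖ε⁻¹ • x‖ ^ s = ε⁻¹ ^ s * ‖x‖ ^ s := by
      rw [hnorm_smul, Real.mul_rpow (by positivity) hxpos.le]
    have h4 : A / (ε⁻¹ ^ s * ‖x‖ ^ s) = A * ε ^ s / ‖x‖ ^ s := by
      rw [Real.inv_rpow hε.le]
      have hεs : 0 < ε ^ s := Real.rpow_pos_of_pos hε s
      have hxs : 0 < ‖x‖ ^ s := Real.rpow_pos_of_pos hxpos s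
      field_simp
    calc Khat (ε⁻¹ • x) ≤ A / (1 + ‖ε⁻¹ • x‖ ^ s) := h1
      _ ≤ A / ‖ε⁻¹ • x‖ ^ s := h2
      _ = A * ε ^ s / ‖x‖ ^ s := by rw [h3, h4]
  have hMpos : (0:ℝ) < M := by linarith
  have hMs : (0:ℝ) < M ^ s / 2 ^ s := by positivity
  have hle : M ^ s / 2 ^ s ≤ ‖x‖ ^ s := by
    rw [← Real.div_rpow (by linarith) (by norm_num)]
    exact Real.rpow_le_rpow (by positivity) hxnorm hspos.le
  have step2 : A * ε ^ s / ‖x‖ ^ s ≤ A * ε ^ s * (2 ^ s / M ^ s) := by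
    calc A * ε ^ s / ‖x‖ ^ s ≤ A * ε ^ s / (M ^ s / 2 ^ s) :=
          div_le_div_of_nonneg_left (by positivity) hMs hle
      _ = A * ε ^ s * (2 ^ s / M ^ s) := by
          rw [div_div_eq_mul_div, mul_div_assoc]
  have h4s : (4:ℝ) ^ s = 2 ^ s * 2 ^ s := by
    rw [← Real.mul_rpow (by norm_num) (by norm_num)]; norm_num
  have hprod_ge : (2*M) ^ (-s) ≤ ∏ k, ((1:ℝ) + |(i k : ℝ)|) ^ (-(s / d)) := by
    have hterm : ∀ k ∈ Finset.univ, ((2*M):ℝ) ^ (-(s/d)) ≤ ((1:ℝ) + |(i k:ℝ)|) ^ (-(s/d)) := by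
      intro k _
      apply Real.rpow_le_rpow_of_nonpos (by positivity) (by have := hMint k; linarith)
      apply neg_nonpos.mpr
      positivity
    calc (2*M)^(-s) = ((2*M) ^ (-(s/d))) ^ (d:ℕ) := by
          rw [← Real.rpow_natCast ((2*M) ^ (-(s/d))) d, ← Real.rpow_mul (by positivity)]
          congr 1
          field_simp
      _ = ∏ _k : Fin d, ((2*M):ℝ) ^ (-(s/d)) := by
          rw [Finset.prod_const, Finset.card_univ, Fintype.card_fin]
      _ ≤ ∏ k, ((1:ℝ) + |(i k:ℝ)|) ^ (-(s/d)) :=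
          Finset.prod_le_prod (fun k _ => by positivity) hterm
  have hMsne : (M:ℝ) ^ s ≠ 0 := by positivity
  calc Khat (ε⁻¹ • x) ≤ A * ε ^ s / ‖x‖ ^ s := step1
    _ ≤ A * ε ^ s * (2 ^ s / M ^ s) := step2
    _ = A * 4 ^ s * ε ^ s * (2*M) ^ (-s) := by
        rw [Real.rpow_neg (by positivity), Real.mul_rpow (by norm_num) hMpos.le, h4s]
        field_simp
    _ ≤ A * 4 ^ s * ε ^ s * ∏ k, ((1:ℝ) + |(i k : ℝ)|) ^ (-(s / d)) :=
        mul_le_mul_of_nonneg_left hprod_ge (by positivity)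


section FiniteBound

variable {d : ℕ}

lemma P_sub (m m' : Fin d → ℤ) (u : EuclideanSpace ℝ (Fin d)) :
    (∑ k, ((m - m') k : ℝ) * u k) = (∑ k, (m k : ℝ) * u k) - ∑ k, (m' k : ℝ) * u k := by
  rw [← Finset.sum_sub_distrib]
  congr 1
  funext k
  push_cast [Pi.sub_apply]
  ring

lemma continuous_P (m : Fin d → ℤ) :
    Continuous (fun u : EuclideanSpace ℝ (Fin d) => ∑ k, (m k : ℝ) * u k) := by
  apply continuous_finset_sum
  intro k _
  exact continuous_const.mul ((continuous_apply k).comp (PiLp.continuous_ofLp (p := 2) (β := fun _ : Fin d => ℝ)))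

lemma integrableOn_Dset_of_bounded {E : Type*} [NormedAddCommGroup E]
    {c : Fin d → ℝ} {h : EuclideanSpace ℝ (Fin d) → E} (hc : Continuous h)
    {C : ℝ} (hC : ∀ u, ‖h u‖ ≤ C) : IntegrableOn h (Dset c) := by
  have hfin : IsFiniteMeasure (volume.restrict (Dset c)) := by
    constructor
    rw [Measure.restrict_apply_univ, volume_Dset]
    exact ENNReal.one_lt_top
  exact Integrable.mono' (integrable_const C) hc.aestronglyMeasurable (ae_of_all _ hC)

lemma finite_bound {ε : ℝ} (hε : 0 < ε)
    {Khat : EuclideanSpace ℝ (Fin d) → ℝ} (hKint : Integrable Khat)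
    {K0 : EuclideanSpace ℝ (Fin d) → ℝ}
    (hK0 : ∀ y, (K0 y : ℂ) =
      ∫ t, (Khat t : ℂ) * Complex.exp (2 * Real.pi * Complex.I * (inner ℝ y t : ℝ)))
    (v : (Fin d → ℤ) → ℝ) (F : Finset (Fin d → ℤ)) (hv : ∑ j ∈ F, v j ^ 2 ≤ 1)
    {Sb : (Fin d → ℤ) → ℝ}
    (hSb : ∀ (i : Fin d → ℤ) (x : EuclideanSpace ℝ (Fin d)),
      (∀ k, |x k - (i k : ℝ)| ≤ 1 / 2) → Khat (ε⁻¹ • x) ≤ Sb i)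
    (hSb0 : ∀ i, 0 ≤ Sb i) (hSbsum : Summable Sb) :
    ∑ p ∈ F ×ˢ F, v p.1 * v p.2 * ε ^ d * K0 (ε • intToEuc d (p.2 - p.1)) ≤ ∑' i, Sb i := by
  classical
  set g : EuclideanSpace ℝ (Fin d) → ℝ := fun u => Khat (ε⁻¹ • u) with hgdef
  have hg : Integrable g := by
    rw [hgdef]
    exact (integrable_comp_smul_iff volume Khat (inv_ne_zero hε.ne')).2 hKint
  -- Step A : Fourier identity
  have hA : ∀ m : Fin d → ℤ, ((ε ^ d * K0 (ε • intToEuc d m) : ℝ) : ℂ) =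
      ∫ u, (g u : ℂ) * e (∑ k, (m k : ℝ) * u k) := by
    intro m
    have hinner : ∀ t : EuclideanSpace ℝ (Fin d),
        (inner ℝ (ε • intToEuc d m) t : ℝ) = ε * ∑ k, (m k : ℝ) * t k := by
      intro t
      rw [real_inner_smul_left]
      congr 1
      rw [PiLp.inner_apply]; simp [intToEuc_apply, mul_comm]
    have hstep : (K0 (ε • intToEuc d m) : ℂ)
        = ∫ t, (Khat t : ℂ) * e (ε * ∑ k, (m k : ℝ) * t k) := by
      rw [hK0]
      apply integral_congr_ae (ae_of_all _ _)
      intro t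
      rw [hinner t]
      rfl
    have hcv := MeasureTheory.Measure.integral_comp_smul (μ := volume)
      (f := fun t : EuclideanSpace ℝ (Fin d) =>
        (Khat t : ℂ) * e (ε * ∑ k, (m k : ℝ) * t k)) ε⁻¹
    rw [finrank_euclideanSpace, Fintype.card_fin] at hcv
    have habs : |((ε⁻¹ ^ d)⁻¹ : ℝ)| = ε ^ d := by
      rw [inv_pow, inv_inv, abs_of_pos (by positivity)]
    rw [habs] at hcv
    have hlhs : ∀ x : EuclideanSpace ℝ (Fin d),
        (Khat (ε⁻¹ • x) : ℂ) * e (ε * ∑ k, (m k : ℝ) * (ε⁻¹ • x) k)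
        = (g x : ℂ) * e (∑ k, (m k : ℝ) * x k) := by
      intro x
      rw [hgdef]
      congr 2
      rw [Finset.mul_sum]
      apply Finset.sum_congr rfl
      intro k _
      have hx : (ε⁻¹ • x) k = ε⁻¹ * x k := rfl
      rw [hx]
      field_simp
    rw [integral_congr_ae (ae_of_all _ hlhs)] at hcv
    rw [hcv, ← hstep, Complex.real_smul]
    push_cast
    ring
  -- the trigonometric polynomial
  set φ : EuclideanSpace ℝ (Fin d) → ℂ :=
    fun u => ∑ j ∈ F, (v j : ℂ) * e (∑ k, (j k : ℝ) * u k) with hφdef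
  have hφcont : Continuous φ := by
    apply continuous_finset_sum
    intro j _
    exact continuous_const.mul (continuous_e.comp (continuous_P j))
  have hφbd : ∀ u, ‖φ u‖ ≤ ∑ j ∈ F, |v j| := by
    intro u
    refine le_trans (norm_sum_le _ _) (le_of_eq (Finset.sum_congr rfl fun j _ => ?_))
    rw [norm_mul, norm_e, mul_one, Complex.norm_real, Real.norm_eq_abs]
  -- pointwise square expansion
  have hsq : ∀ u : EuclideanSpace ℝ (Fin d), (starRingEnd ℂ) (φ u) * φ u
      = ∑ p ∈ F ×ˢ F, ((v p.1 : ℂ) * v p.2) * e (∑ k, ((p.2 - p.1) k : ℝ) * u k) := by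
    intro u
    rw [hφdef]
    simp only [map_sum, map_mul, Complex.conj_ofReal, conj_e]
    rw [Finset.sum_mul_sum, Finset.sum_product]
    apply Finset.sum_congr rfl; intro j _
    apply Finset.sum_congr rfl; intro k _
    rw [P_sub, sub_eq_add_neg, e_add]
    ring
  -- Step B : sum = integral of g * |φ|²
  have hB : ((∑ p ∈ F ×ˢ F, v p.1 * v p.2 * ε ^ d * K0 (ε • intToEuc d (p.2 - p.1)) : ℝ) : ℂ)
      = ∫ u, (g u : ℂ) * ((starRingEnd ℂ) (φ u) * φ u) := by
    have hterm : ∀ p : (Fin d → ℤ) × (Fin d → ℤ),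
        ((v p.1 * v p.2 * ε ^ d * K0 (ε • intToEuc d (p.2 - p.1)) : ℝ) : ℂ)
        = ∫ u, ((v p.1 : ℂ) * v p.2) *
            ((g u : ℂ) * e (∑ k, ((p.2 - p.1) k : ℝ) * u k)) := by
      intro p
      rw [integral_const_mul, ← hA (p.2 - p.1)]
      push_cast
      ring
    have hint2 : ∀ p ∈ F ×ˢ F, Integrable (fun u => ((v p.1 : ℂ) * v p.2) *
        ((g u : ℂ) * e (∑ k, ((p.2 - p.1) k : ℝ) * u k))) := by
      intro p _
      apply Integrable.const_mul
      have h1 := Integrable.bdd_mul (hg.ofReal (𝕜 := ℂ))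
        ((continuous_e.comp (continuous_P (p.2 - p.1))).aestronglyMeasurable)
        (ae_of_all _ fun u => le_of_eq (norm_e _))
      exact h1.congr (ae_of_all _ fun u => mul_comm _ _)
    calc ((∑ p ∈ F ×ˢ F, v p.1 * v p.2 * ε ^ d * K0 (ε • intToEuc d (p.2 - p.1)) : ℝ) : ℂ)
        = ∑ p ∈ F ×ˢ F, ∫ u, ((v p.1 : ℂ) * v p.2) *
            ((g u : ℂ) * e (∑ k, ((p.2 - p.1) k : ℝ) * u k)) := by
          rw [Complex.ofReal_sum]
          exact Finset.sum_congr rfl fun p _ => hterm p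
      _ = ∫ u, ∑ p ∈ F ×ˢ F, ((v p.1 : ℂ) * v p.2) *
            ((g u : ℂ) * e (∑ k, ((p.2 - p.1) k : ℝ) * u k)) :=
          (integral_finset_sum _ hint2).symm
      _ = ∫ u, (g u : ℂ) * ((starRingEnd ℂ) (φ u) * φ u) := by
          apply integral_congr_ae (ae_of_all _ _)
          intro u
          rw [hsq u, Finset.mul_sum]
          apply Finset.sum_congr rfl
          intro p _
          ring
  -- Step C : to a real integral
  set G : EuclideanSpace ℝ (Fin d) → ℝ := fun u => g u * ‖φ u‖ ^ 2 with hGdef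
  have hconj : ∀ z : ℂ, (starRingEnd ℂ) z * z = ((‖z‖ ^ 2 : ℝ) : ℂ) := by
    intro z
    rw [mul_comm, Complex.mul_conj, Complex.normSq_eq_norm_sq]
  have hCeq : ∑ p ∈ F ×ˢ F, v p.1 * v p.2 * ε ^ d * K0 (ε • intToEuc d (p.2 - p.1))
      = ∫ u, G u := by
    have hpt : ∀ u, (g u : ℂ) * ((starRingEnd ℂ) (φ u) * φ u) = ((G u : ℝ) : ℂ) := by
      intro u
      rw [hGdef, hconj]
      push_cast
      ring
    rw [← Complex.ofReal_inj, hB]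
    rw [integral_congr_ae (ae_of_all _ hpt)]
    exact integral_ofReal (𝕜 := ℂ)
  have hGint : Integrable G := by
    have hbd : ∀ u : EuclideanSpace ℝ (Fin d), ‖‖φ u‖ ^ 2‖ ≤ (∑ j ∈ F, |v j|) ^ 2 := by
      intro u
      rw [Real.norm_eq_abs, abs_of_nonneg (by positivity)]
      exact pow_le_pow_left₀ (norm_nonneg _) (hφbd u) 2
    have h1 := Integrable.bdd_mul (𝕜 := ℝ) hg
      ((hφcont.norm.pow 2).aestronglyMeasurable)
      (ae_of_all _ hbd)
    exact h1.congr (ae_of_all _ fun u => mul_comm _ _)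
  -- Step D : cube decomposition
  have hDsum : HasSum (fun i : Fin d → ℤ => ∫ u in Dset (fun k => ((i k : ℝ))), G u)
      (∫ u, G u) := by
    have h := MeasureTheory.hasSum_integral_iUnion
      (μ := volume) (s := fun i : Fin d → ℤ => Dset (fun k => ((i k : ℝ))))
      (fun i => measurableSet_Dset _) Dset_disjoint
      (by rw [Dset_cover]; exact hGint.integrableOn)
    rwa [Dset_cover, Measure.restrict_univ] at h
  -- Step E : Parseval on each cube
  have hParseval : ∀ c : Fin d → ℝ,
      ∫ u in Dset c, ‖φ u‖ ^ 2 = ∑ j ∈ F, v j ^ 2 := by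
    intro c
    have hterm : ∀ p ∈ F ×ˢ F, IntegrableOn (fun u : EuclideanSpace ℝ (Fin d) =>
        ((v p.1 : ℂ) * v p.2) * e (∑ k, ((p.2 - p.1) k : ℝ) * u k)) (Dset c) := by
      intro p _
      apply integrableOn_Dset_of_bounded
        (continuous_const.mul (continuous_e.comp (continuous_P (p.2 - p.1))))
        (C := ‖(v p.1 : ℂ) * v p.2‖)
      intro u
      simp only [Pi.mul_apply, Function.comp_apply, norm_mul, norm_e, mul_one, le_refl]
    have hC : (∫ u in Dset c, (starRingEnd ℂ) (φ u) * φ u)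
        = ∑ p ∈ F ×ˢ F, ((v p.1 : ℂ) * v p.2) * (if p.2 - p.1 = 0 then 1 else 0) := by
      rw [integral_congr_ae (ae_of_all _ hsq)]
      rw [integral_finset_sum _ hterm]
      apply Finset.sum_congr rfl
      intro p _
      rw [integral_const_mul, orth (p.2 - p.1) c]
    have hdiag : ∑ p ∈ F ×ˢ F, ((v p.1 : ℂ) * v p.2) * (if p.2 - p.1 = 0 then 1 else 0)
        = ((∑ j ∈ F, v j ^ 2 : ℝ) : ℂ) := by
      push_cast
      rw [Finset.sum_product]
      apply Finset.sum_congr rfl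
      intro j hj
      simp only [sub_eq_zero, mul_ite, mul_one, mul_zero]
      rw [Finset.sum_ite_eq' F j (fun k => (v j : ℂ) * v k)]
      rw [if_pos hj]
      ring
    rw [← Complex.ofReal_inj, ← hdiag, ← hC]
    rw [show ((∫ u in Dset c, ‖φ u‖ ^ 2 : ℝ) : ℂ) = ∫ u in Dset c, ((‖φ u‖ ^ 2 : ℝ) : ℂ)
      from (integral_ofReal (𝕜 := ℂ)).symm]
    apply integral_congr_ae (ae_of_all _ _)
    intro u
    exact (hconj (φ u)).symm
  -- Step F : bound on each cube
  have hF : ∀ i : Fin d → ℤ, ∫ u in Dset (fun k => ((i k : ℝ))), G u ≤ Sb i := by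
    intro i
    have hmono : ∀ u ∈ Dset (fun k => ((i k : ℝ))), G u ≤ Sb i * ‖φ u‖ ^ 2 := by
      intro u hu
      have hcube : ∀ k, |u k - (i k : ℝ)| ≤ 1 / 2 := by
        intro k
        obtain ⟨h1, h2⟩ := hu k
        rw [abs_le]
        constructor <;> linarith
      have := hSb i u hcube
      rw [hGdef]
      exact mul_le_mul_of_nonneg_right this (by positivity)
    have h2 : IntegrableOn (fun u => Sb i * ‖φ u‖ ^ 2) (Dset (fun k => ((i k : ℝ)))) := by
      apply integrableOn_Dset_of_bounded (continuous_const.mul (hφcont.norm.pow 2))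
        (C := |Sb i| * (∑ j ∈ F, |v j|) ^ 2)
      intro u
      simp only [Pi.mul_apply, Pi.pow_apply]
      rw [norm_mul, Real.norm_eq_abs, Real.norm_eq_abs, abs_of_nonneg (by positivity : (0:ℝ) ≤ ‖φ u‖ ^ 2)]
      exact mul_le_mul_of_nonneg_left (pow_le_pow_left₀ (norm_nonneg _) (hφbd u) 2) (abs_nonneg _)
    calc ∫ u in Dset (fun k => ((i k : ℝ))), G u
        ≤ ∫ u in Dset (fun k => ((i k : ℝ))), Sb i * ‖φ u‖ ^ 2 :=
          setIntegral_mono_on hGint.integrableOn h2 (measurableSet_Dset _) hmono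
      _ = Sb i * ∑ j ∈ F, v j ^ 2 := by rw [integral_const_mul, hParseval]
      _ ≤ Sb i * 1 := mul_le_mul_of_nonneg_left hv (hSb0 i)
      _ = Sb i := mul_one _
  rw [hCeq, ← hDsum.tsum_eq]
  exact Summable.tsum_le_tsum hF hDsum.summable hSbsum

end FiniteBound

end DKEB

open DKEB

theorem discrete_kernel_eigenvalue_bound {d : ℕ} (A τ : ℝ) (hA : 0 < A) (hτ : 0 < τ)
    (Khat : EuclideanSpace ℝ (Fin d) → ℝ)
    (hKdecay : ∀ x, 0 ≤ Khat x ∧ Khat x ≤ A / (1 + ‖x‖ ^ ((d : ℝ) + τ)))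
    (K0 : EuclideanSpace ℝ (Fin d) → ℝ)
    -- K₀ is the inverse Fourier transform of K̂₀
    (hK0 : ∀ y, (K0 y : ℂ) =
      ∫ t, (Khat t : ℂ) * Complex.exp (2 * Real.pi * Complex.I * (inner ℝ y t : ℝ)))
    -- the Toeplitz-type quadratic form on ℓ²(ℤ^d)
    (Q : ℝ → ((Fin d → ℤ) → ℝ) → ℝ)
    (hQ : ∀ ε v, Q ε v = ∑' p : (Fin d → ℤ) × (Fin d → ℤ),
      v p.1 * v p.2 * ε ^ d * K0 (ε • intToEuc d (p.2 - p.1)))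
    -- supremum of K̂₀(·/ε) over the unit cube centered at `i`
    (S : ℝ → (Fin d → ℤ) → ℝ)
    (hS : ∀ ε i, S ε i = sSup ((fun x => Khat (ε⁻¹ • x)) ''
      {x : EuclideanSpace ℝ (Fin d) | ∀ k, |x k - (i k : ℝ)| ≤ 1 / 2})) :
    (∀ ε : ℝ, 0 < ε → ∀ v : (Fin d → ℤ) → ℝ, (∑' j, (v j) ^ 2) = 1 →
      Q ε v ≤ ∑' i : Fin d → ℤ, S ε i) ∧
    Tendsto (fun ε => ∑' i : {i : Fin d → ℤ // i ≠ 0}, S ε i)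
      (nhdsWithin 0 (Set.Ioi 0)) (nhds 0) ∧
    Filter.limsup
      (fun ε => sSup {q | ∃ v : (Fin d → ℤ) → ℝ, (∑' j, (v j) ^ 2) = 1 ∧ q = Q ε v})
      (nhdsWithin 0 (Set.Ioi 0)) ≤ sSup (Set.range Khat) := by
  classical
  set s : ℝ := (d : ℝ) + τ with hsdef
  have hspos : 0 < s := by positivity
  have hKA : ∀ x, Khat x ≤ A := by
    intro x
    refine le_trans (hKdecay x).2 ?_
    rw [div_le_iff₀ (by positivity)]
    nlinarith [Real.rpow_nonneg (norm_nonneg x) s, hA]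
  -- basic facts about S
  have hSmem : ∀ (ε : ℝ) (i : Fin d → ℤ), Khat (ε⁻¹ • intToEuc d i) ∈
      ((fun x => Khat (ε⁻¹ • x)) '' {x | ∀ k, |x k - (i k : ℝ)| ≤ 1 / 2}) := by
    intro ε i
    exact ⟨intToEuc d i, fun k => by simp [intToEuc_apply], rfl⟩
  have hSbdd : ∀ (ε : ℝ) (i : Fin d → ℤ),
      BddAbove ((fun x => Khat (ε⁻¹ • x)) '' {x | ∀ k, |x k - (i k : ℝ)| ≤ 1 / 2}) := by
    intro ε i
    refine ⟨A, ?_⟩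
    rintro y ⟨x, -, rfl⟩
    exact hKA _
  have hS0 : ∀ (ε : ℝ) (i : Fin d → ℤ), 0 ≤ S ε i := by
    intro ε i
    rw [hS]
    exact le_trans (hKdecay _).1 (le_csSup (hSbdd ε i) (hSmem ε i))
  have hSub : ∀ (ε : ℝ) (i : Fin d → ℤ) (x : EuclideanSpace ℝ (Fin d)),
      (∀ k, |x k - (i k : ℝ)| ≤ 1 / 2) → Khat (ε⁻¹ • x) ≤ S ε i := by
    intro ε i x hx
    rw [hS]
    exact le_csSup (hSbdd ε i) ⟨x, hx, rfl⟩
  have hSle : ∀ (ε : ℝ) (i : Fin d → ℤ) (B : ℝ), 0 ≤ B →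
      (∀ x : EuclideanSpace ℝ (Fin d), (∀ k, |x k - (i k : ℝ)| ≤ 1 / 2) →
        Khat (ε⁻¹ • x) ≤ B) → S ε i ≤ B := by
    intro ε i B hB hb
    rw [hS]
    apply Real.sSup_le _ hB
    rintro y ⟨x, hx, rfl⟩
    exact hb x hx
  -- the comparison weights
  set gp : (Fin d → ℤ) → ℝ := fun i => ∏ k, ((1:ℝ) + |(i k : ℝ)|) ^ (-(s / d)) with hgpdef
  have hgp0 : ∀ i, 0 ≤ gp i := by
    intro i
    apply Finset.prod_nonneg
    intro k _
    positivity
  have hgpsum : Summable gp := by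
    rcases Nat.eq_zero_or_pos d with hd | hd
    · subst hd
      exact Summable.of_finite
    · have hp : 1 < s / d := by
        rw [lt_div_iff₀ (by exact_mod_cast hd)]
        simp only [hsdef]
        push_cast
        linarith
      have hb := summable_one_add_abs_int hp
      exact summable_pi_prod hb (fun n => Real.rpow_nonneg (by positivity) _) d
  have hSdecay : ∀ (ε : ℝ), 0 < ε → ∀ (i : Fin d → ℤ), i ≠ 0 →
      S ε i ≤ A * 4 ^ s * ε ^ s * gp i := by
    intro ε hε i hi
    apply hSle ε i _ (by positivity)
    intro x hx
    exact decay_bound hA hτ hε hKdecay i hi x hx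
  have hgpsub : Summable (fun i : {i : Fin d → ℤ // i ≠ 0} => gp i.1) :=
    hgpsum.subtype {i : Fin d → ℤ | i ≠ 0}
  have hSsub : ∀ (ε : ℝ), 0 < ε → Summable (fun i : {i : Fin d → ℤ // i ≠ 0} => S ε i.1) := by
    intro ε hε
    exact Summable.of_nonneg_of_le (fun i => hS0 ε i.1)
      (fun i => hSdecay ε hε i.1 i.2) (hgpsub.mul_left (A * 4 ^ s * ε ^ s))
  have hSsum : ∀ (ε : ℝ), 0 < ε → Summable (S ε) := by
    intro ε hε
    have hfin : Finite ↥({i : Fin d → ℤ | i ≠ 0}ᶜ) := by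
      apply Set.Finite.to_subtype
      apply Set.Finite.subset (Set.finite_singleton 0)
      intro i hi
      simp only [Set.mem_compl_iff, Set.mem_setOf_eq, not_not] at hi
      simp [hi]
    have h1 : Summable (fun i : ↥{i : Fin d → ℤ | i ≠ 0} => S ε i.1) := hSsub ε hε
    have h2 : Summable (fun i : ↥({i : Fin d → ℤ | i ≠ 0}ᶜ) => S ε i.1) :=
      Summable.of_finite
    exact summable_subtype_and_compl.mp ⟨h1, h2⟩
  -- part 1
  have part1 : ∀ ε : ℝ, 0 < ε → ∀ v : (Fin d → ℤ) → ℝ, (∑' j, (v j) ^ 2) = 1 →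
      Q ε v ≤ ∑' i : Fin d → ℤ, S ε i := by
    intro ε hε v hv
    rw [hQ]
    by_cases hKint : Integrable Khat
    · by_cases hsum : Summable (fun p : (Fin d → ℤ) × (Fin d → ℤ) =>
        v p.1 * v p.2 * ε ^ d * K0 (ε • intToEuc d (p.2 - p.1)))
      · have hvsum : Summable (fun j => (v j) ^ 2) := by
          by_contra h
          rw [tsum_eq_zero_of_not_summable h] at hv
          norm_num at hv
        have hvF : ∀ Fs : Finset (Fin d → ℤ), ∑ j ∈ Fs, (v j) ^ 2 ≤ 1 := by
          intro Fs
          rw [← hv]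
          exact Summable.sum_le_tsum Fs (fun j _ => sq_nonneg _) hvsum
        have hFb : ∀ Fs : Finset (Fin d → ℤ),
            ∑ p ∈ Fs ×ˢ Fs, v p.1 * v p.2 * ε ^ d * K0 (ε • intToEuc d (p.2 - p.1))
            ≤ ∑' i, S ε i := by
          intro Fs
          exact finite_bound hε hKint hK0 v Fs (hvF Fs) (fun i x hx => hSub ε i x hx)
            (hS0 ε) (hSsum ε hε)
        have hprodtend : Tendsto (fun Fs : Finset (Fin d → ℤ) => Fs ×ˢ Fs) atTop atTop := by
          apply Filter.tendsto_atTop_atTop.2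
          intro G
          refine ⟨G.image Prod.fst ∪ G.image Prod.snd, fun F hF => ?_⟩
          intro p hp
          rw [Finset.mem_product]
          constructor
          · exact hF (Finset.mem_union_left _ (Finset.mem_image_of_mem _ hp))
          · exact hF (Finset.mem_union_right _ (Finset.mem_image_of_mem _ hp))
        have htend := (hsum.hasSum.comp hprodtend)
        exact le_of_tendsto htend (Filter.Eventually.of_forall hFb)
      · rw [tsum_eq_zero_of_not_summable hsum]
        exact tsum_nonneg (hS0 ε)
    · have hK00 : ∀ y, K0 y = 0 := by
        intro y
        have h := hK0 y
        rw [integral_undef] at h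
        · exact_mod_cast h
        · intro hi
          apply hKint
          have hcont : Continuous (fun t : EuclideanSpace ℝ (Fin d) =>
              Complex.exp (-(2 * Real.pi * Complex.I * ((inner ℝ y t : ℝ) : ℂ)))) := by
            apply Complex.continuous_exp.comp
            apply Continuous.neg
            apply Continuous.mul continuous_const
            exact Complex.continuous_ofReal.comp (continuous_const.inner continuous_id)
          have hmeas : AEStronglyMeasurable (fun t : EuclideanSpace ℝ (Fin d) =>
              (Khat t : ℂ)) volume := by
            have h1 := hi.aestronglyMeasurable.mul hcont.aestronglyMeasurable
            apply h1.congr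
            apply ae_of_all
            intro t
            show (Khat t : ℂ) * Complex.exp (2 * Real.pi * Complex.I * ((inner ℝ y t : ℝ) : ℂ)) *
              Complex.exp (-(2 * Real.pi * Complex.I * ((inner ℝ y t : ℝ) : ℂ))) = (Khat t : ℂ)
            rw [mul_assoc, ← Complex.exp_add, add_neg_cancel, Complex.exp_zero, mul_one]
          have hmeasR : AEStronglyMeasurable Khat volume := by
            have := Complex.continuous_re.comp_aestronglyMeasurable hmeas
            apply this.congr
            exact ae_of_all _ (fun t => by simp)
          apply Integrable.mono' hi.norm hmeasR
          apply ae_of_all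
          intro t
          rw [Real.norm_eq_abs, norm_mul, Complex.norm_real, Real.norm_eq_abs]
          have : ‖Complex.exp (2 * Real.pi * Complex.I * ((inner ℝ y t : ℝ) : ℂ))‖ = 1 := by
            rw [Complex.norm_exp]
            simp [mul_comm, mul_assoc, mul_left_comm]
          rw [this, mul_one]
      simp only [hK00, mul_zero]
      rw [tsum_zero]
      exact tsum_nonneg (hS0 ε)
  -- part 2
  have part2 : Tendsto (fun ε => ∑' i : {i : Fin d → ℤ // i ≠ 0}, S ε i)
      (nhdsWithin 0 (Set.Ioi 0)) (nhds 0) := by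
    set C : ℝ := A * 4 ^ s * ∑' i : {i : Fin d → ℤ // i ≠ 0}, gp i with hCdef
    have hub : ∀ ε ∈ Set.Ioi (0:ℝ), ∑' i : {i : Fin d → ℤ // i ≠ 0}, S ε i ≤ C * ε ^ s := by
      intro ε hε
      calc ∑' i : {i : Fin d → ℤ // i ≠ 0}, S ε i
          ≤ ∑' i : {i : Fin d → ℤ // i ≠ 0}, A * 4 ^ s * ε ^ s * gp i :=
            Summable.tsum_le_tsum (fun i => hSdecay ε hε i.1 i.2) (hSsub ε hε)
              ((hgpsum.subtype _).mul_left _)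
        _ = C * ε ^ s := by
            rw [tsum_mul_left, hCdef]
            ring
    have h1 : Tendsto (fun ε : ℝ => ε ^ s) (nhdsWithin 0 (Set.Ioi 0)) (nhds 0) := by
      apply tendsto_nhdsWithin_of_tendsto_nhds
      have h2 := (Real.continuousAt_rpow_const 0 s (Or.inr hspos.le)).tendsto
      rwa [Real.zero_rpow hspos.ne'] at h2
    have h2 : Tendsto (fun ε : ℝ => C * ε ^ s) (nhdsWithin 0 (Set.Ioi 0)) (nhds 0) := by
      have := h1.const_mul C
      rwa [mul_zero] at this
    apply tendsto_of_tendsto_of_tendsto_of_le_of_le' tendsto_const_nhds h2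
    · exact Filter.Eventually.of_forall (fun ε => tsum_nonneg (fun i => hS0 ε i))
    · exact eventually_mem_nhdsWithin.mono hub
  -- part 3
  have hrbdd : BddAbove (Set.range Khat) := by
    refine ⟨A, ?_⟩
    rintro y ⟨x, rfl⟩
    exact hKA x
  have hr0 : 0 ≤ sSup (Set.range Khat) :=
    le_trans (hKdecay 0).1 (le_csSup hrbdd (Set.mem_range_self 0))
  have hS0le : ∀ ε : ℝ, S ε 0 ≤ sSup (Set.range Khat) := by
    intro ε
    apply hSle ε 0 _ hr0
    intro x _
    exact le_csSup hrbdd (Set.mem_range_self _)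
  have hev : ∀ δ : ℝ, 0 < δ → ∀ᶠ ε in nhdsWithin (0:ℝ) (Set.Ioi 0),
      sSup {q | ∃ v : (Fin d → ℤ) → ℝ, (∑' j, (v j) ^ 2) = 1 ∧ q = Q ε v}
      ≤ sSup (Set.range Khat) + δ := by
    intro δ hδ
    filter_upwards [eventually_mem_nhdsWithin, part2.eventually_lt_const hδ] with ε hε hδε
    apply Real.sSup_le _ (by linarith)
    rintro q ⟨v, hv, rfl⟩
    have hsplit : ∑' i, S ε i = S ε 0 + ∑' i : {i : Fin d → ℤ // i ≠ 0}, S ε i := by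
      rw [Summable.tsum_eq_add_tsum_ite (hSsum ε hε) 0]
      congr 1
      have h3 : ∑' i : {i : Fin d → ℤ // i ≠ 0}, S ε i.1
          = ∑' i, Set.indicator {i : Fin d → ℤ | i ≠ 0} (S ε) i :=
        tsum_subtype {i : Fin d → ℤ | i ≠ 0} (S ε)
      rw [h3]
      apply tsum_congr
      intro i
      by_cases hi : i = 0 <;> simp [Set.indicator, hi]
    calc Q ε v ≤ ∑' i, S ε i := part1 ε hε v hv
      _ = S ε 0 + ∑' i : {i : Fin d → ℤ // i ≠ 0}, S ε i := hsplit
      _ ≤ sSup (Set.range Khat) + δ := add_le_add (hS0le ε) hδε.le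
  -- the distinguished unit vector
  set v₀ : (Fin d → ℤ) → ℝ := fun j => if j = 0 then 1 else 0 with hv₀def
  have hv₀ : (∑' j, (v₀ j) ^ 2) = 1 := by
    have h : ∀ j : Fin d → ℤ, (v₀ j) ^ 2 = if j = 0 then (1:ℝ) else 0 := by
      intro j; rw [hv₀def]; by_cases hj : j = 0 <;> simp [hj]
    rw [tsum_congr h, tsum_ite_eq]
  have hQv₀ : ∀ ε : ℝ, 0 < ε → 0 ≤ Q ε v₀ := by
    intro ε hε
    rw [hQ]
    have hsingle : ∀ p : (Fin d → ℤ) × (Fin d → ℤ),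
        p ≠ ((0 : Fin d → ℤ), (0 : Fin d → ℤ)) →
        v₀ p.1 * v₀ p.2 * ε ^ d * K0 (ε • intToEuc d (p.2 - p.1)) = 0 := by
      intro p hp
      by_cases h1 : p.1 = 0
      · have h2 : p.2 ≠ 0 := by
          intro h2
          exact hp (Prod.ext_iff.mpr ⟨h1, h2⟩)
        rw [hv₀def]; simp [h2]
      · rw [hv₀def]; simp [h1]
    rw [tsum_eq_single ((0 : Fin d → ℤ), (0 : Fin d → ℤ)) hsingle]
    have hz : (ε • intToEuc d ((0 : Fin d → ℤ) - 0)) = (0 : EuclideanSpace ℝ (Fin d)) := by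
      rw [sub_zero]
      have h0 : intToEuc d (0 : Fin d → ℤ) = 0 := by
        ext k
        simp [intToEuc_apply]
      rw [h0, smul_zero]
    have hK00 : 0 ≤ K0 (0 : EuclideanSpace ℝ (Fin d)) := by
      have h := hK0 0
      have h2 : (K0 (0 : EuclideanSpace ℝ (Fin d)) : ℂ) = ∫ t, ((Khat t : ℝ) : ℂ) := by
        rw [h]
        apply integral_congr_ae (ae_of_all _ _)
        intro t
        norm_num
      rw [show (∫ t, ((Khat t : ℝ) : ℂ)) = ((∫ t, Khat t : ℝ) : ℂ)
        from integral_ofReal (𝕜 := ℂ)] at h2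
      have hr : K0 0 = ∫ t, Khat t := by exact_mod_cast h2
      rw [hr]
      exact integral_nonneg (fun t => (hKdecay t).1)
    show 0 ≤ v₀ 0 * v₀ 0 * ε ^ d * K0 (ε • intToEuc d (0 - 0))
    rw [hz]
    have h1 : v₀ (0 : Fin d → ℤ) = 1 := by rw [hv₀def]; simp
    rw [h1, one_mul, one_mul]
    exact mul_nonneg (pow_nonneg hε.le d) hK00
  have hbddQ : ∀ ε : ℝ, 0 < ε →
      BddAbove {q | ∃ v : (Fin d → ℤ) → ℝ, (∑' j, (v j) ^ 2) = 1 ∧ q = Q ε v} := by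
    intro ε hε
    refine ⟨∑' i, S ε i, ?_⟩
    rintro q ⟨v, hv, rfl⟩
    exact part1 ε hε v hv
  have hlow : ∀ ε ∈ Set.Ioi (0:ℝ),
      0 ≤ sSup {q | ∃ v : (Fin d → ℤ) → ℝ, (∑' j, (v j) ^ 2) = 1 ∧ q = Q ε v} := by
    intro ε hε
    exact le_trans (hQv₀ ε hε) (le_csSup (hbddQ ε hε) ⟨v₀, hv₀, rfl⟩)
  have hbelow : Filter.IsBoundedUnder (· ≥ ·) (nhdsWithin (0:ℝ) (Set.Ioi 0))
      (fun ε => sSup {q | ∃ v : (Fin d → ℤ) → ℝ, (∑' j, (v j) ^ 2) = 1 ∧ q = Q ε v}) := by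
    refine ⟨0, ?_⟩
    rw [Filter.eventually_map]
    filter_upwards [eventually_mem_nhdsWithin] with ε hε
    exact hlow ε hε
  have hcobdd := hbelow.isCoboundedUnder_le
  refine ⟨part1, part2, ?_⟩
  apply le_of_forall_pos_le_add
  intro δ hδ
  exact Filter.limsup_le_of_le hcobdd (hev δ hδ)
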